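/- For every n ≥ 1, the total Sackin index S⁽ᵖ⁾_n = Σ_{P ∈ 𝒫(n)} S(P) over all phylogenetic trees on n taxa equals 2^{n−1}·n! − n·(2n−2)!/(2^{n−1}(n−1)!). -/

import Mathlib

/-- Full binary rooted trees with leaves carrying data of type `α`. -/
inductive BTree (α : Type) : Type
  | leaf (a : α) : BTree α
  | node (l r : BTree α) : BTree α

namespace BTree

/-- Number of leaves below (the subtree rooted at) a node. -/
def leaves {α} : BTree α → ℕ
  | leaf _ => 1
  | node l r => leaves l + leaves r

/-- Sackin index: sum over internal nodes of the number of leaves below that node. -/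
def sackin {α} : BTree α → ℕ
  | leaf _ => 0
  | node l r => (leaves l + leaves r) + sackin l + sackin r

/-- Colless index: sum over internal nodes of the absolute difference of leaf counts
of the two children. -/
def colless {α} : BTree α → ℕ
  | leaf _ => 0
  | node l r => ((leaves l : ℤ) - (leaves r : ℤ)).natAbs + colless l + colless r

/-- Sum over all leaves of their depth (number of edges from the root). -/
def depthSum {α} : BTree α → ℕ
  | leaf _ => 0
  | node l r => (depthSum l + leaves l) + (depthSum r + leaves r)

/-- Sum of leaf counts `ℓ_T(u)` over all nodes `u` (including leaves, each counting 1). -/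
def totalL {α} : BTree α → ℕ
  | leaf _ => 1
  | node l r => (leaves l + leaves r) + totalL l + totalL r

/-- Sum over internal nodes of the minimum of the leaf counts of the two children. -/
def minSum {α} : BTree α → ℕ
  | leaf _ => 0
  | node l r => min (leaves l) (leaves r) + minSum l + minSum r

/-- Number of edges strictly below a node (each node of the subtree other than
its root contributes the edge to its parent). -/
def edgesBelow {α} : BTree α → ℕ
  | leaf _ => 0
  | node l r => 2 + edgesBelow l + edgesBelow r

/-- Number of internal (non-leaf) nodes. -/
def internals {α} : BTree α → ℕ
  | leaf _ => 0
  | node l r => 1 + internals l + internals r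

/-- `Subtree s t` means the subtree `s` occurs in `t`; thus `Subtree (node v w) T`
expresses that `T` has an internal node whose two child subtrees are `v` and `w`. -/
inductive Subtree {α} : BTree α → BTree α → Prop
  | refl (t) : Subtree t t
  | left {s l r} : Subtree s l → Subtree s (node l r)
  | right {s l r} : Subtree s r → Subtree s (node l r)

/-- Generating relation of tree-shape isomorphism: swapping the two children of a node. -/
inductive Rel {α} : BTree α → BTree α → Prop
  | swap (l r) : Rel (node l r) (node r l)
  | congrL {l l'} (r) : Rel l l' → Rel (node l r) (node l' r)
  | congrR (l) {r r'} : Rel r r' → Rel (node l r) (node l r')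

/-- The list of leaf labels, left to right. -/
def leafList {α} : BTree α → List α
  | leaf a => [a]
  | node l r => leafList l ++ leafList r

end BTree

/-- Binary tree shapes: full binary rooted trees up to isomorphism (children unordered). -/
def Shape : Type := Quot (@BTree.Rel Unit)

noncomputable def Shape.leaves (q : Shape) : ℕ := BTree.leaves q.out
noncomputable def Shape.sackin (q : Shape) : ℕ := BTree.sackin q.out
noncomputable def Shape.colless (q : Shape) : ℕ := BTree.colless q.out

/-- `bSh n` = number of binary tree shapes with `n` leaves. -/
noncomputable def bSh (n : ℕ) : ℕ := Set.ncard {q : Shape | q.leaves = n}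

/-- `S_n`: total Sackin index over all tree shapes with `n` leaves. -/
noncomputable def Snum (n : ℕ) : ℕ := ∑ᶠ q ∈ {q : Shape | q.leaves = n}, Shape.sackin q

/-- `D_n = (1/2) Σ_{T ∈ 𝒯(n)} (S(T) - C(T))`. -/
noncomputable def Dnum (n : ℕ) : ℕ :=
  (∑ᶠ q ∈ {q : Shape | q.leaves = n}, (Shape.sackin q - Shape.colless q)) / 2

/-- Phylogenetic trees as labelled full binary rooted trees up to isomorphism. -/
def PTree : Type := Quot (@BTree.Rel ℕ)

/-- A labelled tree is a phylogenetic tree on `n` taxa if its leaf labels are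
exactly `{1, ..., n}`, each occurring once. -/
def BTree.isPhylo (n : ℕ) (t : BTree ℕ) : Prop :=
  (BTree.leafList t).Perm ((List.range n).map (· + 1))

/-- The set `𝒫(n)` of phylogenetic trees on `n` taxa. -/
noncomputable def PhyloSet (n : ℕ) : Set PTree := {q | BTree.isPhylo n q.out}

/-- `a_n = |𝒫(n)|`. -/
noncomputable def aP (n : ℕ) : ℕ := Set.ncard (PhyloSet n)

/-- Total Sackin index over all phylogenetic trees on `n` taxa. -/
noncomputable def SpTotal (n : ℕ) : ℕ := ∑ᶠ q ∈ PhyloSet n, BTree.sackin (Quot.out q)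

/-- All trees obtained from `t` by attaching a new leaf labelled `x` on each of the
`2·leaves t - 1` edges of `t` (including the open edge entering the root). -/
def BTree.attach (x : ℕ) : BTree ℕ → List (BTree ℕ)
  | .leaf a => [.node (.leaf a) (.leaf x)]
  | .node l r =>
      .node (.node l r) (.leaf x) ::
        ((BTree.attach x l).map (fun l' => .node l' r) ++
         (BTree.attach x r).map (fun r' => .node l r'))
namespace Auxx

open BTree

abbrev mkP : BTree ℕ → PTree := Quot.mk BTree.Rel

/-- labels as a multiset -/
def labels (t : BTree ℕ) : Multiset ℕ := (BTree.leafList t : Multiset ℕ)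

@[simp] lemma labels_leaf (a : ℕ) : labels (leaf a) = {a} := rfl
@[simp] lemma labels_node (l r : BTree ℕ) : labels (node l r) = labels l + labels r := by
  simp [labels, BTree.leafList]

lemma rel_symm {α} {a b : BTree α} (h : BTree.Rel a b) : BTree.Rel b a := by
  induction h with
  | swap l r => exact Rel.swap r l
  | congrL r h ih => exact Rel.congrL r ih
  | congrR l h ih => exact Rel.congrR l ih

lemma rel_ne_leaf {α} {a b : BTree α} (h : BTree.Rel a b) (c : α) :
    a ≠ leaf c ∧ b ≠ leaf c := by
  cases h <;> exact ⟨by simp, by simp⟩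

lemma rel_labels {a b : BTree ℕ} (h : BTree.Rel a b) : labels a = labels b := by
  induction h with
  | swap l r => simp [add_comm]
  | congrL r h ih => simp [ih]
  | congrR l h ih => simp [ih]

lemma rel_leaves {α} {a b : BTree α} (h : BTree.Rel a b) : leaves a = leaves b := by
  induction h with
  | swap l r => simp [BTree.leaves, Nat.add_comm]
  | congrL r h ih => simp [BTree.leaves, ih]
  | congrR l h ih => simp [BTree.leaves, ih]

lemma rel_sackin {α} {a b : BTree α} (h : BTree.Rel a b) : sackin a = sackin b := by
  induction h with
  | swap l r => simp [BTree.sackin]; omega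
  | congrL r h ih => simp [BTree.sackin, rel_leaves h, ih]
  | congrR l h ih => simp [BTree.sackin, rel_leaves h, ih]

/-- sackin lifted to PTree -/
def sackinQ : PTree → ℕ := Quot.lift BTree.sackin (fun _ _ h => rel_sackin h)

@[simp] lemma sackinQ_mk (t : BTree ℕ) : sackinQ (mkP t) = sackin t := rfl

lemma sackin_out (q : PTree) : BTree.sackin q.out = sackinQ q := by
  conv_rhs => rw [← Quot.out_eq q]
  rfl

def phyloQ (n : ℕ) : PTree → Prop :=
  Quot.lift (BTree.isPhylo n) (by
    intro a b h
    have : labels a = labels b := rel_labels h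
    simp only [BTree.isPhylo]
    have := Multiset.coe_eq_coe.mp this
    exact propext ⟨fun hp => this.symm.trans hp, fun hp => this.trans hp⟩)

@[simp] lemma phyloQ_mk (n : ℕ) (t : BTree ℕ) : phyloQ n (mkP t) = BTree.isPhylo n t := rfl

lemma isPhylo_out (n : ℕ) (q : PTree) : BTree.isPhylo n q.out = phyloQ n q := by
  conv_rhs => rw [← Quot.out_eq q]
  rfl

/-- mk congruence for node -/
lemma mk_node_left {a b : BTree ℕ} (r : BTree ℕ) (h : mkP a = mkP b) :
    mkP (node a r) = mkP (node b r) := by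
  have := congrArg (Quot.lift (fun l => mkP (node l r))
    (fun _ _ h => Quot.sound (Rel.congrL r h))) h
  simpa using this

lemma mk_node_right (l : BTree ℕ) {a b : BTree ℕ} (h : mkP a = mkP b) :
    mkP (node l a) = mkP (node l b) := by
  have := congrArg (Quot.lift (fun r => mkP (node l r))
    (fun _ _ h => Quot.sound (Rel.congrR l h))) h
  simpa using this

end Auxx
deriving instance DecidableEq for BTree

namespace Auxx
open BTree

/-- delete the leaf labelled x -/
def del (x : ℕ) : BTree ℕ → BTree ℕ
  | leaf a => leaf a
  | node l r =>
      if l = leaf x then r else if r = leaf x then l else node (del x l) (del x r)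

lemma del_id (x : ℕ) (t : BTree ℕ) (hx : x ∉ labels t) : del x t = t := by
  induction t with
  | leaf a => rfl
  | node l r ihl ihr =>
      have hxl : x ∉ labels l := by simp at hx; tauto
      have hxr : x ∉ labels r := by simp at hx; tauto
      have h1 : l ≠ leaf x := by rintro rfl; simp at hxl
      have h2 : r ≠ leaf x := by rintro rfl; simp at hxr
      rw [del, if_neg h1, if_neg h2, ihl hxl, ihr hxr]

lemma rel_del {x : ℕ} {a b : BTree ℕ} (h : BTree.Rel a b) :
    mkP (del x a) = mkP (del x b) := by
  induction h with
  | swap l r =>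
      by_cases h1 : l = leaf x
      · by_cases h2 : r = leaf x
        · subst h1; subst h2; rfl
        · rw [del, if_pos h1, del, if_neg h2, if_pos h1]
      · by_cases h2 : r = leaf x
        · rw [del, if_neg h1, if_pos h2, del, if_pos h2]
        · rw [del, if_neg h1, if_neg h2, del, if_neg h2, if_neg h1]
          exact Quot.sound (Rel.swap _ _)
  | congrL r h ih =>
      rename_i l l'
      have h1 := (rel_ne_leaf h x).1
      have h1' := (rel_ne_leaf h x).2
      by_cases hr : r = leaf x
      · rw [del, if_neg h1, if_pos hr, del, if_neg h1', if_pos hr]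
        exact Quot.sound h
      · rw [del, if_neg h1, if_neg hr, del, if_neg h1', if_neg hr]
        exact mk_node_left _ ih
  | congrR l h ih =>
      rename_i r r'
      have h1 := (rel_ne_leaf h x).1
      have h1' := (rel_ne_leaf h x).2
      by_cases hl : l = leaf x
      · rw [del, if_pos hl, del, if_pos hl]
        exact Quot.sound h
      · rw [del, if_neg hl, if_neg h1, del, if_neg hl, if_neg h1']
        exact mk_node_right _ ih

def delQ (x : ℕ) : PTree → PTree := Quot.lift (fun t => mkP (del x t)) (fun _ _ h => rel_del h)

lemma mk_del_congr {x : ℕ} {a b : BTree ℕ} (h : mkP a = mkP b) :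
    mkP (del x a) = mkP (del x b) := by
  have := congrArg (delQ x) h
  simpa [delQ] using this

/-- labels of the sibling subtree of leaf x -/
def sibl (x : ℕ) : BTree ℕ → Multiset ℕ
  | leaf _ => 0
  | node l r =>
      if l = leaf x then labels r else if r = leaf x then labels l
      else if x ∈ labels l then sibl x l else if x ∈ labels r then sibl x r else 0

lemma rel_sibl {x : ℕ} {a b : BTree ℕ} (h : BTree.Rel a b)
    (hc : Multiset.count x (labels a) ≤ 1) : sibl x a = sibl x b := by
  induction h with
  | swap l r =>
      simp only [labels_node, Multiset.count_add] at hc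
      by_cases h1 : l = leaf x
      · have hcl : Multiset.count x (labels l) = 1 := by subst h1; simp
        have hr0 : Multiset.count x (labels r) = 0 := by omega
        have h2 : r ≠ leaf x := by rintro rfl; simp at hr0
        rw [sibl, if_pos h1, sibl, if_neg h2, if_pos h1]
      · by_cases h2 : r = leaf x
        · have hcr : Multiset.count x (labels r) = 1 := by subst h2; simp
          have hl0 : Multiset.count x (labels l) = 0 := by omega
          rw [sibl, if_neg h1, if_pos h2, sibl, if_pos h2]
        · by_cases hxl : x ∈ labels l
          · have hxr : x ∉ labels r := by
              intro hm
              have := Multiset.one_le_count_iff_mem.mpr hm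
              have := Multiset.one_le_count_iff_mem.mpr hxl
              omega
            rw [sibl, if_neg h1, if_neg h2, if_pos hxl, sibl, if_neg h2, if_neg h1,
              if_neg hxr, if_pos hxl]
          · by_cases hxr : x ∈ labels r
            · rw [sibl, if_neg h1, if_neg h2, if_neg hxl, if_pos hxr, sibl, if_neg h2,
                if_neg h1, if_pos hxr]
            · rw [sibl, if_neg h1, if_neg h2, if_neg hxl, if_neg hxr, sibl, if_neg h2,
                if_neg h1, if_neg hxr, if_neg hxl]
  | congrL r h ih =>
      rename_i l l'
      have h1 := (rel_ne_leaf h x).1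
      have h1' := (rel_ne_leaf h x).2
      have hlab := rel_labels h
      simp only [labels_node, Multiset.count_add] at hc
      by_cases hr : r = leaf x
      · rw [sibl, if_neg h1, if_pos hr, sibl, if_neg h1', if_pos hr, hlab]
      · by_cases hxl : x ∈ labels l
        · have hxl' : x ∈ labels l' := hlab ▸ hxl
          rw [sibl, if_neg h1, if_neg hr, if_pos hxl, sibl, if_neg h1', if_neg hr, if_pos hxl']
          exact ih (by omega)
        · have hxl' : x ∉ labels l' := hlab ▸ hxl
          rw [sibl, if_neg h1, if_neg hr, if_neg hxl, sibl, if_neg h1', if_neg hr, if_neg hxl']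
  | congrR l h ih =>
      rename_i r r'
      have h1 := (rel_ne_leaf h x).1
      have h1' := (rel_ne_leaf h x).2
      have hlab := rel_labels h
      simp only [labels_node, Multiset.count_add] at hc
      by_cases hl : l = leaf x
      · rw [sibl, if_pos hl, sibl, if_pos hl, hlab]
      · by_cases hxl : x ∈ labels l
        · rw [sibl, if_neg hl, if_neg h1, if_pos hxl, sibl, if_neg hl, if_neg h1', if_pos hxl]
        · by_cases hxr : x ∈ labels r
          · have hxr' : x ∈ labels r' := hlab ▸ hxr
            have hcr : Multiset.count x (labels r) ≤ 1 := by omega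
            rw [sibl, if_neg hl, if_neg h1, if_neg hxl, if_pos hxr, sibl, if_neg hl,
              if_neg h1', if_neg hxl, if_pos hxr']
            exact ih hcr
          · have hxr' : x ∉ labels r' := hlab ▸ hxr
            rw [sibl, if_neg hl, if_neg h1, if_neg hxl, if_neg hxr, sibl, if_neg hl,
              if_neg h1', if_neg hxl, if_neg hxr']

def sibl2 (x : ℕ) (t : BTree ℕ) : Multiset ℕ :=
  if Multiset.count x (labels t) ≤ 1 then sibl x t else 0

lemma rel_sibl2 {x : ℕ} {a b : BTree ℕ} (h : BTree.Rel a b) : sibl2 x a = sibl2 x b := by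
  have hlab := rel_labels h
  unfold sibl2
  rw [hlab]
  by_cases hc : Multiset.count x (labels b) ≤ 1
  · rw [if_pos hc, if_pos hc]
    exact rel_sibl h (hlab ▸ hc)
  · rw [if_neg hc, if_neg hc]

def sibl2Q (x : ℕ) : PTree → Multiset ℕ :=
  Quot.lift (sibl2 x) (fun _ _ h => rel_sibl2 h)

lemma mk_sibl2_congr {x : ℕ} {a b : BTree ℕ} (h : mkP a = mkP b) : sibl2 x a = sibl2 x b :=
  congrArg (sibl2Q x) h

end Auxx
namespace Auxx
open BTree

lemma one_le_leaves {α} (t : BTree α) : 1 ≤ leaves t := by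
  induction t with
  | leaf a => simp [BTree.leaves]
  | node l r ihl ihr => simp [BTree.leaves]; omega

lemma card_labels (t : BTree ℕ) : Multiset.card (labels t) = leaves t := by
  induction t with
  | leaf a => rfl
  | node l r ihl ihr => simp [BTree.leaves, ihl, ihr]

lemma attach_is_node {x : ℕ} {t t' : BTree ℕ} (h : t' ∈ BTree.attach x t) :
    ∃ p q, t' = node p q := by
  induction t with
  | leaf a => simp [BTree.attach] at h; exact ⟨_, _, h⟩
  | node l r ihl ihr =>
      simp [BTree.attach] at h
      rcases h with h | ⟨a, ha, rfl⟩ | ⟨b, hb, rfl⟩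
      · exact ⟨_, _, h⟩
      · exact ⟨_, _, rfl⟩
      · exact ⟨_, _, rfl⟩

lemma labels_attach {x : ℕ} {t t' : BTree ℕ} (h : t' ∈ BTree.attach x t) :
    labels t' = x ::ₘ labels t := by
  induction t generalizing t' with
  | leaf a =>
      simp [BTree.attach] at h; subst h
      exact Multiset.pair_comm a x
  | node l r ihl ihr =>
      simp [BTree.attach] at h
      rcases h with h | ⟨a, ha, rfl⟩ | ⟨b, hb, rfl⟩
      · subst h
        simp
        rw [add_comm, Multiset.singleton_add]
      · simp [ihl ha]
      · simp [ihr hb]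

lemma leaves_attach {x : ℕ} {t t' : BTree ℕ} (h : t' ∈ BTree.attach x t) :
    leaves t' = leaves t + 1 := by
  have := congrArg Multiset.card (labels_attach h)
  simpa [card_labels] using this

lemma attach_length (x : ℕ) (t : BTree ℕ) :
    (BTree.attach x t).length + 1 = 2 * leaves t := by
  induction t with
  | leaf a => simp [BTree.attach, BTree.leaves]
  | node l r ihl ihr => simp [BTree.attach, BTree.leaves]; omega

lemma node_self_mem_attach (x : ℕ) (t : BTree ℕ) : node t (leaf x) ∈ BTree.attach x t := by
  cases t <;> simp [BTree.attach]

lemma del_attach {x : ℕ} {t t' : BTree ℕ} (hx : x ∉ labels t) (h : t' ∈ BTree.attach x t) :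
    del x t' = t := by
  induction t generalizing t' with
  | leaf a =>
      simp [BTree.attach] at h; subst h
      have : a ≠ x := by simp at hx; omega
      rw [del, if_neg (by simp [this]), if_pos rfl]
  | node l r ihl ihr =>
      have hxl : x ∉ labels l := by simp at hx; tauto
      have hxr : x ∉ labels r := by simp at hx; tauto
      simp [BTree.attach] at h
      rcases h with h | ⟨a, ha, rfl⟩ | ⟨b, hb, rfl⟩
      · subst h
        rw [del, if_neg (by simp), if_pos rfl]
      · obtain ⟨p, q, rfl⟩ := attach_is_node ha
        have hr : r ≠ leaf x := by rintro rfl; simp at hxr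
        rw [del, if_neg (by simp), if_neg hr, ihl hxl ha, del_id x r hxr]
      · obtain ⟨p, q, rfl⟩ := attach_is_node hb
        have hl : l ≠ leaf x := by rintro rfl; simp at hxl
        by_cases hl2 : l = leaf x
        · exact absurd hl2 hl
        · rw [del, if_neg hl, if_neg (by simp), ihr hxr hb, del_id x l hxl]

end Auxx
namespace Auxx
open BTree

lemma sibl_attach {x : ℕ} {t t' : BTree ℕ} (hx : x ∉ labels t) (h : t' ∈ BTree.attach x t) :
    sibl x t' ≤ labels t ∧ sibl x t' ≠ 0 := by
  induction t generalizing t' with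
  | leaf a =>
      simp [BTree.attach] at h; subst h
      have hax : leaf a ≠ leaf (α := ℕ) x := by simp at hx; simp; omega
      rw [sibl, if_neg hax, if_pos rfl]
      simp
  | node l r ihl ihr =>
      have hxl : x ∉ labels l := by simp at hx; tauto
      have hxr : x ∉ labels r := by simp at hx; tauto
      have hlx : l ≠ leaf x := by rintro rfl; simp at hxl
      have hrx : r ≠ leaf x := by rintro rfl; simp at hxr
      simp only [BTree.attach, List.mem_cons, List.mem_append, List.mem_map] at h
      rcases h with h | ⟨a, ha, rfl⟩ | ⟨b, hb, rfl⟩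
      · subst h
        rw [sibl, if_neg (by simp), if_pos rfl]
        constructor
        · exact le_refl _
        · have hcard := card_labels (node l r)
          intro h0
          rw [h0] at hcard
          simp [BTree.leaves] at hcard
          have h1 := one_le_leaves l
          omega
      · obtain ⟨p, q, rfl⟩ := attach_is_node ha
        have hxa : x ∈ labels (node p q) := by rw [labels_attach ha]; simp
        rw [sibl, if_neg (by simp), if_neg hrx, if_pos hxa]
        obtain ⟨h1, h2⟩ := ihl hxl ha
        exact ⟨le_trans h1 (by simp), h2⟩
      · obtain ⟨p, q, rfl⟩ := attach_is_node hb
        have hxb : x ∈ labels (node p q) := by rw [labels_attach hb]; simp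
        have hxnl : x ∉ labels l := hxl
        rw [sibl, if_neg hlx, if_neg (by simp), if_neg hxnl, if_pos hxb]
        obtain ⟨h1, h2⟩ := ihr hxr hb
        exact ⟨le_trans h1 (by simp), h2⟩

lemma sibl_map_nodup {x : ℕ} {t : BTree ℕ} (hx : x ∉ labels t) (hnd : (labels t).Nodup) :
    ((BTree.attach x t).map (sibl x)).Nodup := by
  induction t with
  | leaf a => simp [BTree.attach]
  | node l r ihl ihr =>
      have hxl : x ∉ labels l := by simp at hx; tauto
      have hxr : x ∉ labels r := by simp at hx; tauto
      have hlx : l ≠ leaf x := by rintro rfl; simp at hxl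
      have hrx : r ≠ leaf x := by rintro rfl; simp at hxr
      simp only [labels_node] at hnd
      have hndl : (labels l).Nodup := (Multiset.nodup_add.mp hnd).1
      have hndr : (labels r).Nodup := (Multiset.nodup_add.mp hnd).2.1
      have hdisj : Disjoint (labels l) (labels r) := (Multiset.nodup_add.mp hnd).2.2
      -- compute sibl of each element
      have hhead : sibl x (node (node l r) (leaf x)) = labels (node l r) := by
        rw [sibl, if_neg (by simp), if_pos rfl]
      have hsa : ∀ a ∈ BTree.attach x l, sibl x (node a r) = sibl x a := by
        intro a ha
        obtain ⟨p, q, rfl⟩ := attach_is_node ha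
        have hxa : x ∈ labels (node p q) := by rw [labels_attach ha]; simp
        rw [sibl, if_neg (by simp), if_neg hrx, if_pos hxa]
      have hsb : ∀ b ∈ BTree.attach x r, sibl x (node l b) = sibl x b := by
        intro b hb
        obtain ⟨p, q, rfl⟩ := attach_is_node hb
        have hxb : x ∈ labels (node p q) := by rw [labels_attach hb]; simp
        rw [sibl, if_neg hlx, if_neg (by simp), if_neg hxl, if_pos hxb]
      rw [BTree.attach]
      simp only [List.map_cons, List.map_append, List.map_map, List.nodup_cons]
      constructor
      · -- head not in the rest
        rw [hhead]
        simp only [List.mem_append, List.mem_map, Function.comp]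
        rintro (⟨a, ha, hea⟩ | ⟨b, hb, heb⟩)
        · have hea2 : sibl x (node a r) = labels (node l r) := by simpa using hea
          rw [hsa a ha] at hea2
          have := (sibl_attach hxl ha).1
          rw [hea2] at this
          simp only [labels_node] at this
          have hc := Multiset.card_le_card this
          simp [Multiset.card_add, card_labels] at hc
          have := one_le_leaves r
          omega
        · have heb2 : sibl x (node l b) = labels (node l r) := by simpa using heb
          rw [hsb b hb] at heb2
          have := (sibl_attach hxr hb).1
          rw [heb2] at this
          simp only [labels_node] at this
          have hc := Multiset.card_le_card this
          simp [Multiset.card_add, card_labels] at hc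
          have := one_le_leaves l
          omega
      · rw [List.nodup_append]
        refine ⟨?_, ?_, ?_⟩
        · -- left block nodup
          have e : List.map (sibl x ∘ fun l' => l'.node r) (BTree.attach x l)
              = (BTree.attach x l).map (sibl x) := by
            rw [show (sibl x ∘ fun l' => l'.node r) = fun a => sibl x (node a r) from rfl]
            exact List.map_congr_left hsa
          rw [e]; exact ihl hxl hndl
        · have e : List.map (sibl x ∘ fun r' => l.node r') (BTree.attach x r)
              = (BTree.attach x r).map (sibl x) := by
            rw [show (sibl x ∘ fun r' => l.node r') = fun b => sibl x (node l b) from rfl]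
            exact List.map_congr_left hsb
          rw [e]; exact ihr hxr hndr
        · -- disjoint blocks
          intro m hm m' hm' hmm; subst hmm
          rw [List.mem_map] at hm hm'
          obtain ⟨a, ha, hea⟩ := hm
          obtain ⟨b, hb, heb⟩ := hm'
          have hea' : sibl x (node a r) = m := by simpa using hea
          have heb' : sibl x (node l b) = m := by simpa using heb
          rw [hsa a ha] at hea'
          rw [hsb b hb] at heb'
          have h1 := sibl_attach hxl ha
          have h2 := sibl_attach hxr hb
          rw [hea'] at h1
          rw [heb'] at h2
          -- sibl x a ≤ labels l, ≤ labels r, nonempty, disjoint: contradiction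
          obtain ⟨y, hy⟩ := Multiset.exists_mem_of_ne_zero h1.2
          have hyl : y ∈ labels l := Multiset.mem_of_le h1.1 hy
          have hyr : y ∈ labels r := Multiset.mem_of_le h2.1 hy
          exact (Multiset.disjoint_left.mp hdisj hyl) hyr

end Auxx
namespace Auxx
open BTree

lemma attach_mk_nodup {x : ℕ} {t : BTree ℕ} (hx : x ∉ labels t) (hnd : (labels t).Nodup) :
    ((BTree.attach x t).map mkP).Nodup := by
  have hs := sibl_map_nodup hx hnd
  have hinj := List.inj_on_of_nodup_map hs
  refine List.Nodup.map_on ?_ (hs.of_map _)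
  intro a ha b hb hab
  have hs2 : sibl2 x a = sibl2 x b := mk_sibl2_congr hab
  have h0 : Multiset.count x (labels t) = 0 := Multiset.count_eq_zero.mpr hx
  have hca : Multiset.count x (labels a) ≤ 1 := by
    rw [labels_attach ha, Multiset.count_cons_self, h0]
  have hcb : Multiset.count x (labels b) ≤ 1 := by
    rw [labels_attach hb, Multiset.count_cons_self, h0]
  rw [sibl2, sibl2, if_pos hca, if_pos hcb] at hs2
  exact hinj ha hb hs2

/-- One-step Rel transport of attach classes -/
lemma attach_rel_step {x : ℕ} {s s' : BTree ℕ} (h : BTree.Rel s s') :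
    ∀ t' ∈ BTree.attach x s, ∃ t'' ∈ BTree.attach x s', mkP t' = mkP t'' := by
  induction h with
  | swap l r =>
      intro t' ht'
      simp only [BTree.attach, List.mem_cons, List.mem_append, List.mem_map] at ht'
      rcases ht' with rfl | ⟨a, ha, rfl⟩ | ⟨b, hb, rfl⟩
      · exact ⟨node (node r l) (leaf x), by simp [BTree.attach],
          Quot.sound (Rel.congrL _ (Rel.swap l r))⟩
      · refine ⟨node r a, ?_, Quot.sound (Rel.swap _ _)⟩
        exact List.mem_cons_of_mem _ (List.mem_append_right _ (List.mem_map_of_mem ha))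
      · refine ⟨node b l, ?_, Quot.sound (Rel.swap _ _)⟩
        exact List.mem_cons_of_mem _ (List.mem_append_left _ (List.mem_map_of_mem hb))
  | congrL r h ih =>
      rename_i l l'
      intro t' ht'
      simp only [BTree.attach, List.mem_cons, List.mem_append, List.mem_map] at ht'
      rcases ht' with rfl | ⟨a, ha, rfl⟩ | ⟨b, hb, rfl⟩
      · exact ⟨node (node l' r) (leaf x), by simp [BTree.attach],
          Quot.sound (Rel.congrL _ (Rel.congrL _ h))⟩
      · obtain ⟨a', ha', hm⟩ := ih a ha
        refine ⟨node a' r, ?_, mk_node_left r hm⟩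
        exact List.mem_cons_of_mem _ (List.mem_append_left _ (List.mem_map_of_mem ha'))
      · refine ⟨node l' b, ?_, Quot.sound (Rel.congrL _ h)⟩
        exact List.mem_cons_of_mem _ (List.mem_append_right _ (List.mem_map_of_mem hb))
  | congrR l h ih =>
      rename_i r r'
      intro t' ht'
      simp only [BTree.attach, List.mem_cons, List.mem_append, List.mem_map] at ht'
      rcases ht' with rfl | ⟨a, ha, rfl⟩ | ⟨b, hb, rfl⟩
      · exact ⟨node (node l r') (leaf x), by simp [BTree.attach],
          Quot.sound (Rel.congrL _ (Rel.congrR _ h))⟩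
      · refine ⟨node a r', ?_, Quot.sound (Rel.congrR _ h)⟩
        exact List.mem_cons_of_mem _ (List.mem_append_left _ (List.mem_map_of_mem ha))
      · obtain ⟨b', hb', hm⟩ := ih b hb
        refine ⟨node l b', ?_, mk_node_right l hm⟩
        exact List.mem_cons_of_mem _ (List.mem_append_right _ (List.mem_map_of_mem hb'))

def attachCl (x : ℕ) (s : BTree ℕ) : Set PTree := {q | ∃ t' ∈ BTree.attach x s, mkP t' = q}

lemma attachCl_rel {x : ℕ} {s s' : BTree ℕ} (h : BTree.Rel s s') :
    attachCl x s = attachCl x s' := by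
  apply Set.eq_of_subset_of_subset
  · rintro q ⟨t', ht', rfl⟩
    obtain ⟨t'', ht'', hm⟩ := attach_rel_step h t' ht'
    exact ⟨t'', ht'', hm.symm⟩
  · rintro q ⟨t', ht', rfl⟩
    obtain ⟨t'', ht'', hm⟩ := attach_rel_step (rel_symm h) t' ht'
    exact ⟨t'', ht'', hm.symm⟩

def attachClQ (x : ℕ) : PTree → Set PTree :=
  Quot.lift (attachCl x) (fun _ _ h => attachCl_rel h)

lemma attach_congr {x : ℕ} {s s' : BTree ℕ} (h : mkP s = mkP s') :
    ∀ t' ∈ BTree.attach x s, ∃ t'' ∈ BTree.attach x s', mkP t' = mkP t'' := by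
  intro t' ht'
  have : attachCl x s = attachCl x s' := congrArg (attachClQ x) h
  have hmem : mkP t' ∈ attachCl x s := ⟨t', ht', rfl⟩
  rw [this] at hmem
  obtain ⟨t'', ht'', hm⟩ := hmem
  exact ⟨t'', ht'', hm.symm⟩

/-- detach: remove leaf x up to isomorphism -/
lemma detach {x : ℕ} : ∀ t : BTree ℕ, x ∈ labels t → 2 ≤ leaves t →
    ∃ s : BTree ℕ, labels s + {x} = labels t ∧
      ∃ t' ∈ BTree.attach x s, mkP t = mkP t' := by
  intro t
  induction t with
  | leaf a => intro _ h2; simp [BTree.leaves] at h2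
  | node l r ihl ihr =>
      intro hx _
      by_cases hl : l = leaf x
      · subst hl
        refine ⟨r, by simp [Multiset.singleton_add, add_comm], node r (leaf x),
          node_self_mem_attach x r, Quot.sound (Rel.swap _ _)⟩
      · by_cases hr : r = leaf x
        · subst hr
          exact ⟨l, by simp, node l (leaf x), node_self_mem_attach x l, rfl⟩
        · simp only [labels_node, Multiset.mem_add] at hx
          rcases hx with hxl | hxr
          · have hlnode : 2 ≤ leaves l := by
              cases l with
              | leaf a =>
                  exfalso
                  apply hl
                  simp [labels, BTree.leafList] at hxl
                  rw [hxl]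
              | node p q =>
                  simp [BTree.leaves]
                  have := one_le_leaves p
                  have := one_le_leaves q
                  omega
            obtain ⟨s₁, hs₁, t₁, ht₁, hm₁⟩ := ihl hxl hlnode
            refine ⟨node s₁ r, by simp [← hs₁]; rw [add_right_comm], node t₁ r, ?_, ?_⟩
            · exact List.mem_cons_of_mem _ (List.mem_append_left _ (List.mem_map_of_mem ht₁))
            · exact mk_node_left r hm₁
          · have hrnode : 2 ≤ leaves r := by
              cases r with
              | leaf a =>
                  exfalso
                  apply hr
                  simp [labels, BTree.leafList] at hxr
                  rw [hxr]
              | node p q =>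
                  simp [BTree.leaves]
                  have := one_le_leaves p
                  have := one_le_leaves q
                  omega
            obtain ⟨s₁, hs₁, t₁, ht₁, hm₁⟩ := ihr hxr hrnode
            refine ⟨node l s₁, by simp [← hs₁]; rw [add_assoc], node l t₁, ?_, ?_⟩
            · exact List.mem_cons_of_mem _ (List.mem_append_right _ (List.mem_map_of_mem ht₁))
            · exact mk_node_right l hm₁

end Auxx
namespace Auxx
open BTree

lemma sum_map_const_add {α : Type} (L : List α) (c : ℕ) (g : α → ℕ) :
    (L.map (fun a => c + g a)).sum = L.length * c + (L.map g).sum := by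
  induction L with
  | nil => simp
  | cons h t ih => simp [ih]; ring

lemma attach_sackin_sum (x : ℕ) (t : BTree ℕ) :
    ((BTree.attach x t).map sackin).sum
      = (2 * leaves t + 2) * sackin t + (leaves t + 1) := by
  induction t with
  | leaf a => simp [BTree.attach, BTree.sackin, BTree.leaves]
  | node l r ihl ihr =>
      have hLl := attach_length x l
      have hLr := attach_length x r
      have hsl : ∀ a ∈ BTree.attach x l,
          sackin (node a r) = (leaves l + 1 + leaves r + sackin r) + sackin a := by
        intro a ha
        show (leaves a + leaves r) + sackin a + sackin r = _
        rw [leaves_attach ha]; ring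
      have hsr : ∀ b ∈ BTree.attach x r,
          sackin (node l b) = (leaves r + 1 + leaves l + sackin l) + sackin b := by
        intro b hb
        show (leaves l + leaves b) + sackin l + sackin b = _
        rw [leaves_attach hb]; ring
      have e1 : List.map (sackin ∘ fun l' => node l' r) (BTree.attach x l)
          = (BTree.attach x l).map (fun a => (leaves l + 1 + leaves r + sackin r) + sackin a) :=
        List.map_congr_left hsl
      have e2 : List.map (sackin ∘ fun r' => node l r') (BTree.attach x r)
          = (BTree.attach x r).map (fun b => (leaves r + 1 + leaves l + sackin l) + sackin b) :=
        List.map_congr_left hsr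
      simp only [BTree.attach, List.map_cons, List.map_append, List.sum_cons,
        List.sum_append, List.map_map, e1, e2, sum_map_const_add, ihl, ihr]
      show (leaves (node l r) + 1) + sackin (node l r) + 0 + _ = _
      show _ = (2 * (leaves l + leaves r) + 2) * ((leaves l + leaves r) + sackin l + sackin r)
          + ((leaves l + leaves r) + 1)
      simp only [BTree.leaves, BTree.sackin]
      zify
      zify at hLl hLr
      set p := (leaves l : ℤ)
      set q := (leaves r : ℤ)
      set Sl := (sackin l : ℤ)
      set Sr := (sackin r : ℤ)
      set Ll := ((BTree.attach x l).length : ℤ)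
      set Lr := ((BTree.attach x r).length : ℤ)
      linear_combination (p + 1 + q + Sr) * hLl + (q + 1 + p + Sl) * hLr

end Auxx
namespace Auxx
open BTree

def allT : ℕ → List (BTree ℕ)
  | 0 => [leaf 1]
  | n+1 => (allT n).flatMap (BTree.attach (n+2))

def labs (n : ℕ) : Multiset ℕ := (((List.range n).map (· + 1)) : List ℕ)

lemma labs_succ (n : ℕ) : labs (n+1) = (n+1) ::ₘ labs n := by
  show ((((List.range (n+1)).map (· + 1)) : List ℕ) : Multiset ℕ) = _
  rw [List.range_succ, List.map_append, ← Multiset.coe_add, add_comm, List.map_singleton,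
    Multiset.coe_singleton, Multiset.singleton_add]
  rfl

lemma mem_labs {n y : ℕ} : y ∈ labs n ↔ 1 ≤ y ∧ y ≤ n := by
  unfold labs
  rw [Multiset.mem_coe, List.mem_map]
  constructor
  · rintro ⟨a, ha, rfl⟩
    rw [List.mem_range] at ha
    omega
  · rintro ⟨h1, h2⟩
    exact ⟨y - 1, by rw [List.mem_range]; omega, by omega⟩

lemma labs_nodup (n : ℕ) : (labs n).Nodup := by
  unfold labs
  rw [Multiset.coe_nodup]
  exact List.Nodup.map (fun a b h => by omega) List.nodup_range

lemma isPhylo_iff_labels {n : ℕ} {t : BTree ℕ} : BTree.isPhylo n t ↔ labels t = labs n := by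
  unfold BTree.isPhylo labels labs
  exact ⟨fun h => Multiset.coe_eq_coe.mpr h, fun h => Multiset.coe_eq_coe.mp h⟩

lemma allT_labels : ∀ n, ∀ t ∈ allT n, labels t = labs (n+1) := by
  intro n
  induction n with
  | zero =>
      intro t ht
      simp [allT] at ht
      subst ht
      rw [labs_succ, labs]
      rfl
  | succ n ih =>
      intro t ht
      simp only [allT, List.mem_flatMap] at ht
      obtain ⟨s, hs, hts⟩ := ht
      rw [labels_attach hts, ih s hs, labs_succ (n+1)]

lemma not_mem_labels_allT {n : ℕ} {t : BTree ℕ} (ht : t ∈ allT n) : (n + 2) ∉ labels t := by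
  rw [allT_labels n t ht, mem_labs]
  omega

lemma allT_mk_nodup : ∀ n, ((allT n).map mkP).Nodup := by
  intro n
  induction n with
  | zero => simp [allT]
  | succ n ih =>
      show ((( allT n).flatMap (BTree.attach (n+2))).map mkP).Nodup
      rw [List.map_flatMap]
      rw [List.nodup_flatMap]
      constructor
      · intro s hs
        exact attach_mk_nodup (not_mem_labels_allT hs)
          (by rw [allT_labels n s hs]; exact labs_nodup _)
      · have hpw : List.Pairwise (fun a b => mkP a ≠ mkP b) (allT n) :=
          List.pairwise_map.mp ih
        refine List.Pairwise.imp_of_mem ?_ hpw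
        intro a b ha hb hab
        intro q hqa hqb
        rw [List.mem_map] at hqa hqb
        obtain ⟨t1, ht1, rfl⟩ := hqa
        obtain ⟨t2, ht2, he⟩ := hqb
        have hd := mk_del_congr (x := n+2) he.symm
        rw [del_attach (not_mem_labels_allT ha) ht1] at hd
        rw [del_attach (not_mem_labels_allT hb) ht2] at hd
        exact hab hd

end Auxx
namespace Auxx
open BTree

lemma card_labs (n : ℕ) : Multiset.card (labs n) = n := by
  unfold labs
  rw [Multiset.coe_card, List.length_map, List.length_range]

lemma leaves_allT {n : ℕ} {t : BTree ℕ} (ht : t ∈ allT n) : leaves t = n + 1 := by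
  have hc := card_labels t
  rw [allT_labels n t ht, card_labs] at hc
  omega

lemma allT_complete : ∀ n, ∀ t : BTree ℕ, BTree.isPhylo (n+1) t → ∃ s ∈ allT n, mkP t = mkP s := by
  intro n
  induction n with
  | zero =>
      intro t ht
      rw [isPhylo_iff_labels] at ht
      cases t with
      | leaf a =>
          have : a = 1 := by
            have := ht
            rw [labs_succ] at this
            simp [labs] at this
            simpa using this
          subst this
          exact ⟨leaf 1, by simp [allT], rfl⟩
      | node l r =>
          exfalso
          have hc := card_labels (node l r)
          rw [ht] at hc
          have h1 : Multiset.card (labs 1) = 1 := by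
            rw [labs_succ]
            simp [labs]
          rw [h1] at hc
          have := one_le_leaves l
          have := one_le_leaves r
          simp [BTree.leaves] at hc
          omega
  | succ n ih =>
      intro t ht
      rw [isPhylo_iff_labels] at ht
      have hx : (n+2) ∈ labels t := by rw [ht, mem_labs]; omega
      have h2 : 2 ≤ leaves t := by
        have hc := card_labels t
        rw [ht, card_labs] at hc
        omega
      obtain ⟨s, hls, t', ht', hm⟩ := detach t hx h2
      have hlabs : labels s = labs (n+1) := by
        rw [ht, labs_succ (n+1), ← Multiset.singleton_add, add_comm ({n+1+1} : Multiset ℕ)] at hls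
        have : (n+1+1 : ℕ) = n+2 := rfl
        rw [this] at hls
        exact add_right_cancel hls
      obtain ⟨s₀, hs₀, hm₀⟩ := ih s (isPhylo_iff_labels.mpr hlabs)
      obtain ⟨t'', ht'', hmm⟩ := attach_congr (x := n+2) hm₀ t' ht'
      refine ⟨t'', ?_, ?_⟩
      · show t'' ∈ (allT n).flatMap (BTree.attach (n+2))
        rw [List.mem_flatMap]
        exact ⟨s₀, hs₀, ht''⟩
      · rw [hm, hmm]

lemma phyloSet_eq (n : ℕ) : PhyloSet (n+1) = {q : PTree | q ∈ (allT n).map mkP} := by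
  ext q
  simp only [PhyloSet, Set.mem_setOf_eq]
  constructor
  · intro h
    obtain ⟨s, hs, hm⟩ := allT_complete n q.out h
    have hq : mkP (Quot.out q) = q := Quot.out_eq q
    rw [List.mem_map]
    exact ⟨s, hs, (hq.symm.trans hm).symm⟩
  · intro h
    obtain ⟨s, hs, rfl⟩ := List.mem_map.mp h
    rw [isPhylo_out]
    show BTree.isPhylo (n+1) s
    exact isPhylo_iff_labels.mpr (allT_labels n s hs)

lemma spTotal_eq (n : ℕ) : SpTotal (n+1) = ((allT n).map sackin).sum := by
  classical
  unfold SpTotal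
  rw [phyloSet_eq]
  have hset : {q : PTree | q ∈ (allT n).map mkP} = (((allT n).map mkP).toFinset : Set PTree) := by
    ext q; simp
  rw [hset, finsum_mem_coe_finset]
  have hcong : ∑ q ∈ ((allT n).map mkP).toFinset, BTree.sackin q.out
      = ∑ q ∈ ((allT n).map mkP).toFinset, sackinQ q :=
    Finset.sum_congr rfl (fun q _ => sackin_out q)
  rw [hcong, List.sum_toFinset _ (allT_mk_nodup n), List.map_map]
  rfl

def dfact : ℕ → ℕ
  | 0 => 1
  | n+1 => (2*n+1) * dfact n

lemma sum_map_const {α : Type} (L : List α) (c : ℕ) :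
    (L.map (fun _ => c)).sum = L.length * c := by
  induction L with
  | nil => simp
  | cons h t ih => simp [ih]; ring

lemma allT_length (n : ℕ) : (allT n).length = dfact n := by
  induction n with
  | zero => rfl
  | succ n ih =>
      show ((allT n).flatMap (BTree.attach (n+2))).length = _
      rw [List.length_flatMap]
      have hc : ∀ t ∈ allT n, (List.length ∘ BTree.attach (n+2)) t = 2*n+1 := by
        intro t ht
        have h := attach_length (n+2) t
        have hl := leaves_allT ht
        simp only [Function.comp_apply]
        omega
      rw [List.map_congr_left (f := fun a => (BTree.attach (n+2) a).length) hc, sum_map_const, ih]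
      simp only [dfact]
      ring

lemma sum_flatMap' {α : Type} (L : List α) (f : α → List ℕ) :
    (L.flatMap f).sum = (L.map fun a => (f a).sum).sum := by
  induction L with
  | nil => rfl
  | cons x t ih => simp [ih]

lemma sum_map_affine {α : Type} (L : List α) (c d : ℕ) (f g : α → ℕ)
    (h : ∀ a ∈ L, f a = c * g a + d) :
    (L.map f).sum = c * (L.map g).sum + L.length * d := by
  induction L with
  | nil => simp
  | cons x t ih =>
      simp only [List.map_cons, List.sum_cons, List.length_cons]
      rw [h x (by simp), ih (fun a ha => h a (by simp [ha]))]
      ring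

lemma spl_closed (n : ℕ) :
    ((allT n).map sackin).sum + (n+1) * dfact n = 2^n * Nat.factorial (n+1) := by
  induction n with
  | zero => simp [allT, BTree.sackin, dfact]
  | succ n ih =>
      have hmap : ((allT (n+1)).map sackin).sum
          = (2*(n+1)+2) * ((allT n).map sackin).sum + (allT n).length * ((n+1)+1) := by
        show (((allT n).flatMap (BTree.attach (n+2))).map sackin).sum = _
        rw [List.map_flatMap]
        have : ∀ t ∈ allT n,
            (fun t => (((BTree.attach (n+2)) t).map sackin).sum) t
              = (2*(n+1)+2) * sackin t + ((n+1)+1) := by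
          intro t ht
          simp only []
          rw [attach_sackin_sum, leaves_allT ht]
        rw [sum_flatMap']
        exact sum_map_affine _ _ _ _ _ this
      rw [hmap, allT_length]
      have h2 : 2^(n+1) * Nat.factorial (n+1+1) = (2*(n+1)+2) * (2^n * Nat.factorial (n+1)) := by
        rw [Nat.factorial_succ (n+1), pow_succ]
        ring
      rw [h2, ← ih]
      show _ + (n+2) * ((2*n+1) * dfact n) = _
      ring

lemma dfact_fact (k : ℕ) : Nat.factorial (2*k) = dfact k * (2^k * Nat.factorial k) := by
  induction k with
  | zero => rfl
  | succ k ih =>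
      have h : 2*(k+1) = (2*k+1)+1 := by ring
      rw [h, Nat.factorial_succ, Nat.factorial_succ, ih, Nat.factorial_succ k, pow_succ]
      show _ = (2*k+1) * dfact k * _
      ring

end Auxx

theorem stmt_19' : ∀ n : ℕ, 1 ≤ n →
    SpTotal n = 2 ^ (n - 1) * Nat.factorial n -
      n * (Nat.factorial (2 * n - 2) / (2 ^ (n - 1) * Nat.factorial (n - 1))) := by
  intro n hn
  obtain ⟨k, rfl⟩ : ∃ k, n = k + 1 := ⟨n-1, by omega⟩
  have h1 : k + 1 - 1 = k := rfl
  have h2 : 2*(k+1) - 2 = 2*k := by omega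
  rw [h1, h2]
  have hdiv : Nat.factorial (2*k) / (2^k * Nat.factorial k) = Auxx.dfact k := by
    rw [Auxx.dfact_fact k]
    exact Nat.mul_div_cancel _ (by positivity)
  rw [hdiv, Auxx.spTotal_eq k, ← Auxx.spl_closed k, Nat.add_sub_cancel]

/-- for `n ≥ 1`,
`S⁽ᵖ⁾_n = 2^(n-1) n! - n (2n-2)! / (2^(n-1) (n-1)!)`. -/
theorem stmt_19 : ∀ n : ℕ, 1 ≤ n →
    SpTotal n = 2 ^ (n - 1) * Nat.factorial n -
      n * (Nat.factorial (2 * n - 2) / (2 ^ (n - 1) * Nat.factorial (n - 1))) := by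
  exact stmt_19'
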